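/- Let M ≥ 3 be an odd integer. Then the center of the periodic quantum Volterra algebra A_M^a equals the K-subalgebra generated by the single element C = u_M u_{M−1} ⋯ u_2 u_1. -/

import Mathlib

noncomputable section
open scoped BigOperators Classical

abbrev K : Type := RatFunc ℂ

noncomputable def ω : K := RatFunc.X

def nu {k : ℕ} (α : Fin k → ℤ) (i : ℤ) : ℕ :=
  (Finset.univ.filter (fun j => α j = i)).card

def shift {k : ℕ} (α : Fin k → ℤ) (m : ℤ) : Fin k → ℤ := fun j => α j + m

def Adm (k : ℕ) : Set (Fin k → ℤ) :=
  {α | (∀ j : Fin k, -((j : ℕ) : ℤ) ≤ α j ∧ α j ≤ (k : ℤ) - ((j : ℕ) : ℤ) - 1) ∧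
       (∀ i : Fin k, ∀ h : (i : ℕ) + 1 < k, α i ≤ α ⟨(i : ℕ) + 1, h⟩ + 1)}

def Noninc (k : ℕ) : Set (Fin k → ℤ) :=
  {α | ∀ i : Fin k, ∀ h : (i : ℕ) + 1 < k,
      α ⟨(i : ℕ) + 1, h⟩ ≤ α i ∧ α i ≤ α ⟨(i : ℕ) + 1, h⟩ + 1}

def NSet (k : ℕ) : Set (Fin (k+1) → ℤ) :=
  {α | α ∈ Adm (k+1) ∧ α ∈ Noninc (k+1) ∧ α (Fin.last k) = 0}

noncomputable def gbinom (m r : ℕ) : K :=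
  ∏ s ∈ Finset.range r, (1 - ω ^ (m - s)) / (1 - ω ^ (s + 1))

noncomputable def P {k : ℕ} (α : Fin (k+1) → ℤ) : K :=
  if α ∈ Adm (k+1) ∩ Noninc (k+1) then
    (∏ i ∈ Finset.Icc (1 : ℤ) (α 0),
        gbinom (nu α i + nu α (i-1) - 1) (nu α i)) *
    (∏ i ∈ Finset.Icc (α (Fin.last k) + 1) (0 : ℤ),
        gbinom (nu α i + nu α (i-1) - 1) (nu α (i-1)))
  else 0

/-- The free algebra on generators `u_n`, `n ∈ ℤ/M`. -/
abbrev FM (M : ℕ) : Type := FreeAlgebra K (ZMod M)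

noncomputable def vgen {M : ℕ} (n : ZMod M) : FM M := FreeAlgebra.ι K n

/-- Defining relations of the periodic quantum Volterra algebra `A_M^a`. -/
inductive RelAM (M : ℕ) : FM M → FM M → Prop
  | comm1 (n : ZMod M) : RelAM M (vgen n * vgen (n+1)) (ω • (vgen (n+1) * vgen n))
  | comm2 (n m : ZMod M) : n - m ≠ 1 → n - m ≠ -1 →
      RelAM M (vgen n * vgen m) (vgen m * vgen n)

/-- The periodic quantum Volterra algebra `A_M^a`. -/
abbrev AaM (M : ℕ) : Type := RingQuot (RelAM M)

noncomputable def πaM (M : ℕ) : FM M →ₐ[K] AaM M := RingQuot.mkAlgHom K (RelAM M)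

/-- The generator `u_n` of `A_M^a`. -/
noncomputable def w (M : ℕ) (n : ZMod M) : AaM M := πaM M (vgen n)

/-- The monomial `u_{α+k}` of `A_M^a`, subscripts read modulo `M`. -/
noncomputable def monoM (M : ℕ) {l : ℕ} (α : Fin l → ℤ) (k : ZMod M) : AaM M :=
  (List.ofFn (fun j => w M (((α j : ℤ) : ZMod M) + k))).prod

/-- The shifted polynomial `S^k(X_M^{(l)}) ∈ A_M^a`. -/
noncomputable def XM (M l : ℕ) (k : ZMod M) : AaM M := ∑ᶠ α ∈ Adm l, monoM M α k

/-- The periodic quantum Hamiltonian `H_{l+1} ∈ A_M^a`. -/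
noncomputable def HM (M l : ℕ) : AaM M :=
  ∑ᶠ α ∈ NSet l, ∑ k ∈ Finset.range M,
    (P α * (ω ^ (l+1) - 1) / (ω ^ (nu α 0) - 1)) • monoM M α (k : ZMod M)

/-- The element `C = u_M u_{M−1} ⋯ u_2 u_1` of `A_M^a`. -/
noncomputable def Cfull (M : ℕ) : AaM M :=
  (List.ofFn (fun j : Fin M => w M (((M - (j : ℕ) : ℕ) : ZMod M)))).prod

open Classical

lemma omega_ne_zero : ω ≠ 0 := RatFunc.X_ne_zero

lemma omega_pow_inj {i j : ℕ} (h : ω ^ i = ω ^ j) : i = j := by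
  have hX : (Polynomial.X : Polynomial ℂ) ^ i = Polynomial.X ^ j := by
    apply IsFractionRing.injective (Polynomial ℂ) (RatFunc ℂ)
    simpa [ω, map_pow, RatFunc.algebraMap_X] using h
  have := congrArg Polynomial.natDegree hX
  simpa using this

namespace Vol

variable {M : ℕ}

lemma two_ne_zero_zmod (hM : 3 ≤ M) : (2 : ZMod M) ≠ 0 := by
  haveI : NeZero M := ⟨by omega⟩
  intro h
  have : (M : ℕ) ∣ 2 := by
    exact (ZMod.natCast_eq_zero_iff 2 M).mp (by exact_mod_cast h)
  have := Nat.le_of_dvd (by norm_num) this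
  omega

lemma wrel1 (n : ZMod M) : w M n * w M (n+1) = ω • (w M (n+1) * w M n) := by
  have := RingQuot.mkAlgHom_rel K (RelAM.comm1 (M := M) n)
  simpa [w, πaM, map_mul, map_smul] using this

lemma wrel2 {n m : ZMod M} (h1 : n - m ≠ 1) (h2 : n - m ≠ -1) :
    w M n * w M m = w M m * w M n := by
  have := RingQuot.mkAlgHom_rel K (RelAM.comm2 (M := M) n m h1 h2)
  simpa [w, πaM, map_mul] using this

lemma swap_pair (n m : ZMod M) : ∃ x : ℤ, w M n * w M m = ω ^ x • (w M m * w M n) := by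
  by_cases h1 : m = n + 1
  · exact ⟨1, by simpa [h1] using wrel1 (M := M) n⟩
  · by_cases h2 : n = m + 1
    · refine ⟨-1, ?_⟩
      have := wrel1 (M := M) m
      rw [← h2] at this
      rw [this, smul_smul]
      rw [zpow_neg_one, inv_mul_cancel₀ omega_ne_zero, one_smul]
    · refine ⟨0, ?_⟩
      rw [zpow_zero, one_smul]
      apply wrel2
      · intro h; apply h2; rw [sub_eq_iff_eq_add] at h; rw [h, add_comm]
      · intro h; apply h1
        have hn : n = m - 1 := by
          have := sub_eq_iff_eq_add.mp h
          rw [this]; ring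
        rw [hn]; ring

/-- product of a list of generators -/
noncomputable def E (l : List (ZMod M)) : AaM M := (l.map (w M)).prod

@[simp] lemma E_nil : E ([] : List (ZMod M)) = 1 := rfl

@[simp] lemma E_cons (n : ZMod M) (t : List (ZMod M)) : E (n :: t) = w M n * E t := by
  simp [E]

lemma E_append (l1 l2 : List (ZMod M)) : E (l1 ++ l2) = E l1 * E l2 := by
  simp [E]

lemma swap_list (n : ZMod M) (l : List (ZMod M)) :
    ∃ x : ℤ, w M n * E l = ω ^ x • (E l * w M n) := by
  induction l with
  | nil => exact ⟨0, by simp⟩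
  | cons m t ih =>
    obtain ⟨x, hx⟩ := ih
    obtain ⟨y, hy⟩ := swap_pair (M := M) n m
    refine ⟨y + x, ?_⟩
    rw [E_cons, ← mul_assoc, hy, smul_mul_assoc, mul_assoc, hx, mul_smul_comm,
      smul_smul, ← zpow_add₀ omega_ne_zero, ← mul_assoc]

end Vol


namespace Vol

variable {M : ℕ}

/-- indicator vector -/
def D (n : ZMod M) : ZMod M → ℕ := fun i => if i = n then 1 else 0

@[simp] lemma D_self (n : ZMod M) : D n n = 1 := by simp [D]

/-- canonical list of all residues -/
noncomputable def L0 (M : ℕ) : List (ZMod M) :=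
  (List.finRange M).map (fun j : Fin M => ((j.val : ℕ) : ZMod M))

lemma L0_nodup : (L0 M).Nodup := by
  rw [L0]
  apply (List.nodup_finRange M).map
  intro a b hab
  have ha := ZMod.val_cast_of_lt (show ((a : ℕ)) < M from a.2)
  have hb := ZMod.val_cast_of_lt (show ((b : ℕ)) < M from b.2)
  apply Fin.ext
  have := congrArg ZMod.val hab
  simpa [ha, hb] using this

lemma mem_L0 [NeZero M] (i : ZMod M) : i ∈ L0 M := by
  rw [L0]
  refine List.mem_map.mpr ⟨⟨i.val, ZMod.val_lt i⟩, List.mem_finRange _, ?_⟩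
  exact ZMod.natCast_rightInverse i

/-- canonical word for an exponent vector -/
noncomputable def cw (a : ZMod M → ℕ) : List (ZMod M) :=
  (L0 M).flatMap (fun m => List.replicate (a m) m)

lemma count_flatMap_nodup (a : ZMod M → ℕ) (i : ZMod M) :
    ∀ (L : List (ZMod M)), L.Nodup →
      (L.flatMap (fun m => List.replicate (a m) m)).count i
        = if i ∈ L then a i else 0 := by
  intro L
  induction L with
  | nil => simp
  | cons m t ih =>
    intro hnd
    rw [List.nodup_cons] at hnd
    rw [List.flatMap_cons, List.count_append, List.count_replicate, ih hnd.2]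
    by_cases him : i = m
    · subst him
      simp [hnd.1]
    · simp [him, Ne.symm him]

lemma count_cw [NeZero M] (a : ZMod M → ℕ) (i : ZMod M) : (cw a).count i = a i := by
  rw [cw, count_flatMap_nodup a i (L0 M) L0_nodup, if_pos (mem_L0 i)]

/-- the canonical monomial -/
noncomputable def em (a : ZMod M → ℕ) : AaM M := E (cw a)

lemma cw_zero : cw (M := M) (fun _ => 0) = [] := by
  rw [cw]
  induction (L0 M) with
  | nil => rfl
  | cons m t ih => rw [List.flatMap_cons, ih]; simp

@[simp] lemma em_zero : em (M := M) (fun _ => 0) = 1 := by rw [em, cw_zero, E_nil]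

lemma E_replicate (n : ZMod M) (k : ℕ) :
    w M n * E (List.replicate k n) = E (List.replicate (k+1) n) := by
  rw [List.replicate_succ, E_cons]

lemma insertion [NeZero M] (n : ZMod M) (c : ZMod M → ℕ) :
    ∃ x : ℤ, w M n * em c = ω ^ x • em (c + D n) := by
  obtain ⟨P, Q, hPQ⟩ := List.append_of_mem (mem_L0 (M := M) n)
  have hnodup : (L0 M).Nodup := L0_nodup
  rw [hPQ] at hnodup
  rw [List.nodup_append] at hnodup
  have hnP : n ∉ P := fun h => hnodup.2.2 n h n List.mem_cons_self rfl
  have hnQ : n ∉ Q := by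
    have := hnodup.2.1
    rw [List.nodup_cons] at this
    exact this.1
  have keyP : ∀ (b : ZMod M → ℕ), P.flatMap (fun m => List.replicate (b m) m)
      = P.flatMap (fun m => List.replicate ((b + D n) m) m) := by
    intro b
    apply List.flatMap_congr
    intro m hm
    have : m ≠ n := fun h => hnP (h ▸ hm)
    simp [D, this]
  have keyQ : ∀ (b : ZMod M → ℕ), Q.flatMap (fun m => List.replicate (b m) m)
      = Q.flatMap (fun m => List.replicate ((b + D n) m) m) := by
    intro b
    apply List.flatMap_congr
    intro m hm
    have : m ≠ n := fun h => hnQ (h ▸ hm)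
    simp [D, this]
  have hcw : ∀ (b : ZMod M → ℕ), cw b =
      P.flatMap (fun m => List.replicate (b m) m) ++
      (List.replicate (b n) n ++ Q.flatMap (fun m => List.replicate (b m) m)) := by
    intro b
    rw [cw, hPQ, List.flatMap_append, List.flatMap_cons]
  obtain ⟨x, hx⟩ := swap_list (M := M) n (P.flatMap (fun m => List.replicate (c m) m))
  refine ⟨x, ?_⟩
  have hcn : (c + D n) n = c n + 1 := by simp [D]
  rw [em, em, hcw c, hcw (c + D n), E_append, E_append, E_append, E_append,
    ← mul_assoc, hx, smul_mul_assoc]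
  congr 1
  rw [← keyP c, ← keyQ c, hcn, ← E_replicate]
  simp only [mul_assoc]

lemma Elb [NeZero M] (l : List (ZMod M)) (c : ZMod M → ℕ) :
    ∃ x : ℤ, E l * em c = ω ^ x • em (fun i => l.count i + c i) := by
  induction l generalizing c with
  | nil =>
    refine ⟨0, ?_⟩
    simp only [E_nil, one_mul, zpow_zero, one_smul]
    congr 1
    funext i
    simp
  | cons m t ih =>
    obtain ⟨x, hx⟩ := ih c
    obtain ⟨y, hy⟩ := insertion m (fun i => t.count i + c i)
    refine ⟨x + y, ?_⟩
    rw [E_cons, mul_assoc, hx, mul_smul_comm, hy, smul_smul, ← zpow_add₀ omega_ne_zero]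
    congr 2
    funext i
    simp [List.count_cons, D]
    by_cases him : i = m
    · subst him; simp; ring
    · simp [him, Ne.symm him]

lemma straight [NeZero M] (l : List (ZMod M)) :
    ∃ x : ℤ, E l = ω ^ x • em (fun i => l.count i) := by
  obtain ⟨x, hx⟩ := Elb l (fun _ => 0)
  refine ⟨x, ?_⟩
  simpa using hx

lemma eprod [NeZero M] (a b : ZMod M → ℕ) :
    ∃ x : ℤ, em a * em b = ω ^ x • em (a + b) := by
  obtain ⟨x, hx⟩ := Elb (cw a) b
  refine ⟨x, ?_⟩
  rw [em, hx]
  congr 2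
  funext i
  simp [count_cw, Pi.add_apply]

end Vol


set_option synthInstance.maxHeartbeats 1000000
set_option maxHeartbeats 1000000

namespace Vol

variable {M : ℕ}

/-- representation space -/
abbrev V (M : ℕ) : Type := (ZMod M → ℕ) →₀ K

/-- generator action -/
noncomputable def ρgen (n : ZMod M) : Module.End K (V M) :=
  Finsupp.lsum K (fun a => ω ^ (a (n+1)) • Finsupp.lsingle (a + D n))

lemma ρgen_single (n : ZMod M) (a : ZMod M → ℕ) (r : K) :
    ρgen n (Finsupp.single a r) = ω ^ (a (n+1)) • Finsupp.single (a + D n) r := by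
  rw [ρgen, Finsupp.lsum_single, LinearMap.smul_apply, Finsupp.lsingle_apply]

/-- lift to the free algebra -/
noncomputable def ρF (M : ℕ) : FM M →ₐ[K] Module.End K (V M) :=
  FreeAlgebra.lift K ρgen

lemma ρF_rel (hM : 3 ≤ M) : ∀ ⦃x y : FM M⦄, RelAM M x y → ρF M x = ρF M y := by
  intro x y hxy
  induction hxy with
  | comm1 n =>
    apply Finsupp.lhom_ext
    intro a r
    have h2 : n + 2 ≠ n := by
      intro h
      apply two_ne_zero_zmod (M := M) hM
      have h' : n + 2 = n + 0 := by rw [add_zero]; exact h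
      exact add_left_cancel h'
    simp only [map_mul, map_smul, Module.End.mul_apply, LinearMap.smul_apply,
      ρF, FreeAlgebra.lift_ι_apply, vgen, ρgen_single, map_smul, smul_smul]
    have hv : (a + D (n+1) + D n : ZMod M → ℕ) = a + D n + D (n+1) := by
      funext i; simp only [Pi.add_apply]; omega
    have he1 : ((a + D (n+1) : ZMod M → ℕ)) (n+1) = a (n+1) + 1 := by
      simp [Pi.add_apply, D]
    have he2 : ((a + D n : ZMod M → ℕ)) (n+1+1) = a (n+1+1) := by
      have hne : n+1+1 ≠ n := by rw [add_assoc, one_add_one_eq_two]; exact h2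
      simp [Pi.add_apply, D, hne]
    rw [hv, he1, he2]
    congr 1
    rw [ω]
    ring
  | comm2 n m h1 h2 =>
    apply Finsupp.lhom_ext
    intro a r
    have hmn : m + 1 ≠ n := by
      intro h; exact h1 (by rw [← h]; ring)
    have hnm : n + 1 ≠ m := by
      intro h; exact h2 (by rw [← h]; ring)
    simp only [map_mul, Module.End.mul_apply, ρF, FreeAlgebra.lift_ι_apply, vgen,
      ρgen_single, map_smul, smul_smul]
    have hv : (a + D m + D n : ZMod M → ℕ) = a + D n + D m := by
      funext i; simp only [Pi.add_apply]; omega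
    have he1 : ((a + D m : ZMod M → ℕ)) (n+1) = a (n+1) := by
      simp [Pi.add_apply, D, hnm]
    have he2 : ((a + D n : ZMod M → ℕ)) (m+1) = a (m+1) := by
      simp [Pi.add_apply, D, hmn]
    rw [hv, he1, he2]
    congr 1
    ring

/-- the representation of `A_M^a` -/
noncomputable def ρA (hM : 3 ≤ M) : AaM M →ₐ[K] Module.End K (V M) :=
  RingQuot.liftAlgHom K ⟨ρF M, ρF_rel hM⟩

lemma ρA_w (hM : 3 ≤ M) (n : ZMod M) : ρA hM (w M n) = ρgen n := by
  rw [ρA, w, πaM, RingQuot.liftAlgHom_mkAlgHom_apply, ρF, vgen, FreeAlgebra.lift_ι_apply]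

/-- exponent bookkeeping -/
def Rexp : List (ZMod M) → (ZMod M → ℕ) → ℕ
  | [], _ => 0
  | n :: t, b => Rexp t b + (t.count (n+1) + b (n+1))

@[simp] lemma Rexp_nil (b : ZMod M → ℕ) : Rexp [] b = 0 := rfl

@[simp] lemma Rexp_cons (n : ZMod M) (t : List (ZMod M)) (b : ZMod M → ℕ) :
    Rexp (n :: t) b = Rexp t b + (t.count (n+1) + b (n+1)) := rfl

lemma ρA_E (hM : 3 ≤ M) (l : List (ZMod M)) (b : ZMod M → ℕ) (r : K) :
    ρA hM (E l) (Finsupp.single b r)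
      = ω ^ (Rexp l b) • Finsupp.single ((fun i => l.count i) + b) r := by
  induction l with
  | nil =>
    simp only [E_nil, map_one, Rexp, Module.End.one_apply, pow_zero, one_smul]
    congr 1
    funext i
    simp
  | cons n t ih =>
    rw [E_cons, map_mul, Module.End.mul_apply, ih, map_smul, ρA_w, ρgen_single,
      smul_smul, ← pow_add]
    have he : ((fun i => t.count i) + b) (n+1) = t.count (n+1) + b (n+1) := rfl
    have hv : ((fun i => (n :: t).count i) + b : ZMod M → ℕ)
        = ((fun i => t.count i) + b) + D n := by
      funext i
      simp only [Pi.add_apply, List.count_cons, D, beq_iff_eq]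
      by_cases him : i = n
      · subst him; simp; omega
      · simp [him, Ne.symm him]
    rw [he, hv, Rexp_cons]

/-- normalization exponent of a monomial -/
noncomputable def ta (a : ZMod M → ℕ) : ℕ := Rexp (cw a) 0

/-- the pairing -/
noncomputable def Qp [NeZero M] (a b : ZMod M → ℕ) : ℕ := ∑ m : ZMod M, a m * b (m+1)

lemma Rexp_shift (l : List (ZMod M)) (b : ZMod M → ℕ) :
    Rexp l b = Rexp l 0 + (l.map (fun n => b (n+1))).sum := by
  induction l with
  | nil => simp
  | cons n t ih =>
    simp only [Rexp_cons, List.map_cons, List.sum_cons, ih, Pi.zero_apply]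
    omega

lemma sum_map_count [NeZero M] (l : List (ZMod M)) (b : ZMod M → ℕ) :
    (l.map (fun n => b (n+1))).sum = ∑ m : ZMod M, l.count m * b (m+1) := by
  induction l with
  | nil => simp
  | cons n t ih =>
    rw [List.map_cons, List.sum_cons, ih]
    have key : ∑ m : ZMod M, (if n = m then 1 else 0) * b (m+1) = b (n+1) := by
      rw [Finset.sum_eq_single n]
      · simp
      · intro m _ hmn; simp [Ne.symm hmn]
      · intro h; exact absurd (Finset.mem_univ n) h
    have hcnt : ∀ m : ZMod M, (n :: t).count m = t.count m + if n = m then 1 else 0 := by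
      intro m; rw [List.count_cons]; simp
    have hs : ∑ m : ZMod M, (n :: t).count m * b (m+1)
        = ∑ m : ZMod M, (t.count m * b (m+1) + (if n = m then 1 else 0) * b (m+1)) :=
      Finset.sum_congr rfl (fun m _ => by rw [hcnt m, add_mul])
    rw [hs, Finset.sum_add_distrib, key]
    exact (add_comm _ _)

lemma ρA_em (hM : 3 ≤ M) [NeZero M] (a b : ZMod M → ℕ) (r : K) :
    ρA hM (em a) (Finsupp.single b r)
      = ω ^ (ta a + Qp a b) • Finsupp.single (a + b) r := by
  rw [em, ρA_E hM, Rexp_shift, sum_map_count]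
  have h1 : ∑ m : ZMod M, (cw a).count m * b (m+1) = Qp a b := by
    rw [Qp]; exact Finset.sum_congr rfl (fun m _ => by rw [count_cw])
  have h2 : (fun i => (cw a).count i) = a := by funext i; rw [count_cw]
  rw [h1, h2, ta, cw]

end Vol


namespace Vol

variable {M : ℕ}

lemma w_mem_span [NeZero M] (n : ZMod M) :
    w M n ∈ Submodule.span K (Set.range (em (M := M))) := by
  have hE : E [n] = w M n := by simp [E]
  obtain ⟨x, hx⟩ := straight (M := M) [n]
  rw [← hE, hx]
  exact Submodule.smul_mem _ _ (Submodule.subset_span ⟨_, rfl⟩)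

lemma adjoin_w_top : Algebra.adjoin K (Set.range (w M)) = ⊤ := by
  have h0 : Set.range (w M) = ⇑(πaM M) '' Set.range (vgen (M := M)) := by
    rw [← Set.range_comp]; rfl
  have h1 : Set.range (vgen (M := M)) = Set.range (FreeAlgebra.ι K (X := ZMod M)) := rfl
  rw [h0, ← AlgHom.map_adjoin, h1, FreeAlgebra.adjoin_range_ι, Algebra.map_top,
    AlgHom.range_eq_top]
  exact RingQuot.mkAlgHom_surjective K _

lemma span_em_top [NeZero M] :
    Submodule.span K (Set.range (em (M := M))) = ⊤ := by
  set S := Submodule.span K (Set.range (em (M := M))) with hS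
  have h1 : (1 : AaM M) ∈ S := by
    rw [← em_zero (M := M)]
    exact Submodule.subset_span ⟨_, rfl⟩
  have hmul : ∀ x y : AaM M, x ∈ S → y ∈ S → x * y ∈ S := by
    intro x y hx hy
    have : S * S ≤ S := by
      rw [hS, Submodule.span_mul_span]
      apply Submodule.span_le.mpr
      rintro _ ⟨u, ⟨a, rfl⟩, v, ⟨b, rfl⟩, rfl⟩
      show em a * em b ∈ _
      obtain ⟨x, hx⟩ := eprod (M := M) a b
      rw [hx]
      exact Submodule.smul_mem _ _ (Submodule.subset_span ⟨_, rfl⟩)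
    exact this (Submodule.mul_mem_mul hx hy)
  have htop : (⊤ : Subalgebra K (AaM M)) ≤ Submodule.toSubalgebra S h1 hmul := by
    rw [← adjoin_w_top (M := M)]
    apply Algebra.adjoin_le
    intro u hu
    obtain ⟨n, rfl⟩ := hu
    exact w_mem_span n
  apply Submodule.eq_top_iff'.mpr
  intro z
  exact htop (Algebra.mem_top (R := K))

lemma rep_exists [NeZero M] (z : AaM M) :
    ∃ c : (ZMod M → ℕ) →₀ K, z = c.sum fun a r => r • em a := by
  have hz : z ∈ Submodule.span K (Set.range (em (M := M))) := by
    rw [span_em_top]; exact Submodule.mem_top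
  rw [← Finsupp.range_linearCombination] at hz
  obtain ⟨c, hc⟩ := hz
  exact ⟨c, by rw [← hc, Finsupp.linearCombination_apply]⟩

lemma eval_sum_single {X : Type} (F : Finset X) (f : X → K) (v : X → (ZMod M → ℕ))
    (hv : Function.Injective v) (p : X) (hp : p ∈ F) :
    (∑ a ∈ F, f a • Finsupp.single (v a) (1:K)) (v p) = f p := by
  rw [Finsupp.finset_sum_apply, Finset.sum_eq_single p]
  · simp
  · intro a _ hap
    rw [Finsupp.smul_apply, Finsupp.single_apply, if_neg (fun h => hap (hv h)), smul_zero]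
  · intro h; exact absurd hp h

lemma Qp_zero [NeZero M] (a : ZMod M → ℕ) : Qp a 0 = 0 := by
  simp [Qp]

lemma Qp_D [NeZero M] (a : ZMod M → ℕ) (n : ZMod M) : Qp a (D n) = a (n - 1) := by
  rw [Qp]
  have hD : ∀ m : ZMod M, D n (m + 1) = if m + 1 = n then 1 else 0 := fun m => rfl
  rw [Finset.sum_eq_single (n - 1)]
  · rw [hD, if_pos (sub_add_cancel n 1), mul_one]
  · intro m _ hm
    rw [hD, if_neg (fun h => hm (eq_sub_of_add_eq h)), mul_zero]
  · intro h; exact absurd (Finset.mem_univ _) h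

lemma Qp_one_symm [NeZero M] (a : ZMod M → ℕ) :
    Qp (fun _ => 1) a = Qp a (fun _ => 1) := by
  rw [Qp, Qp]
  simp only [one_mul, mul_one]
  exact Equiv.sum_comp (Equiv.addRight (1 : ZMod M)) a

lemma rhoA_rep (hM : 3 ≤ M) [NeZero M] (c : (ZMod M → ℕ) →₀ K) (b : ZMod M → ℕ) :
    ρA hM (c.sum fun a r => r • em a) (Finsupp.single b 1)
      = ∑ a ∈ c.support, (c a * ω ^ (ta a + Qp a b)) • Finsupp.single (a + b) (1:K) := by
  rw [Finsupp.sum, map_sum, LinearMap.sum_apply]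
  apply Finset.sum_congr rfl
  intro a _
  rw [map_smul, LinearMap.smul_apply, ρA_em hM, smul_smul]

lemma rep_coeff_zero (hM : 3 ≤ M) [NeZero M] (c : (ZMod M → ℕ) →₀ K)
    (h : (c.sum fun a r => r • em a) = 0) : c = 0 := by
  have h2 := congrArg (fun u => ρA hM u (Finsupp.single 0 1)) h
  simp only [map_zero, LinearMap.zero_apply] at h2
  rw [rhoA_rep hM] at h2
  ext a
  by_cases ha : a ∈ c.support
  · have := congrArg (fun φ : V M => φ (a + 0)) h2
    rw [eval_sum_single c.support _ (fun a => a + 0) (fun x y h => by simpa using h) a ha] at this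
    rw [Finsupp.coe_zero, Pi.zero_apply] at this
    have hω : ω ^ (ta a + Qp a 0) ≠ 0 := pow_ne_zero _ omega_ne_zero
    rcases mul_eq_zero.mp this with h' | h'
    · exact h'
    · exact absurd h' hω
  · simpa using Finsupp.notMem_support_iff.mp ha

end Vol


namespace Vol

variable {M : ℕ}

lemma eprod_exp (hM : 3 ≤ M) [NeZero M] {a b : ZMod M → ℕ} {x : ℤ}
    (hx : em a * em b = ω ^ x • em (a + b)) :
    ω ^ (ta b) * ω ^ (ta a + Qp a b) = ω ^ x * ω ^ (ta (a + b)) := by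
  have h := congrArg (fun u => ρA hM u (Finsupp.single 0 1)) hx
  simp only [map_mul, Module.End.mul_apply, map_smul, LinearMap.smul_apply] at h
  rw [ρA_em hM b 0] at h
  simp only [Qp_zero, add_zero] at h
  rw [LinearMap.map_smul, ρA_em hM a b, ρA_em hM (a+b) 0] at h
  simp only [Qp_zero, add_zero, smul_smul] at h
  have h2 := congrArg (fun φ : V M => φ (a + b)) h
  simp only [Finsupp.smul_apply, Finsupp.single_eq_same, smul_eq_mul, mul_one] at h2
  exact h2

lemma commute_em (hM : 3 ≤ M) [NeZero M] {a b : ZMod M → ℕ} (hQ : Qp a b = Qp b a) :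
    em a * em b = em b * em a := by
  obtain ⟨x1, hx1⟩ := eprod (M := M) a b
  obtain ⟨x2, hx2⟩ := eprod (M := M) b a
  have e1 := eprod_exp hM hx1
  have e2 := eprod_exp hM hx2
  have hab : a + b = b + a := add_comm a b
  have hL : ω ^ (ta b) * ω ^ (ta a + Qp a b) = ω ^ (ta a) * ω ^ (ta b + Qp b a) := by
    rw [pow_add, pow_add, hQ]; ring
  rw [hL, e2, ← hab] at e1
  have hkey : ω ^ x1 = ω ^ x2 :=
    mul_right_cancel₀ (pow_ne_zero _ omega_ne_zero) e1.symm
  rw [hx1, hx2, hab, hkey]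

/-- the canonical word for `Cfull` -/
noncomputable def lC (M : ℕ) : List (ZMod M) :=
  List.ofFn (fun j : Fin M => (((M - (j : ℕ) : ℕ)) : ZMod M))

lemma Cfull_eq_E : Cfull M = E (lC M) := by
  rw [Cfull, E, lC, List.map_ofFn]
  rfl

lemma lC_count [NeZero M] (i : ZMod M) : (lC M).count i = 1 := by
  have hg : ∀ j : Fin M, (((M - (j : ℕ) : ℕ)) : ZMod M) = -(((j : ℕ) : ℕ) : ZMod M) := by
    intro j
    have hle : (j : ℕ) ≤ M := le_of_lt j.2
    rw [Nat.cast_sub hle, ZMod.natCast_self, zero_sub]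
  have hinj : Function.Injective (fun j : Fin M => (((M - (j : ℕ) : ℕ)) : ZMod M)) := by
    intro a b hab
    simp only [hg] at hab
    have hab2 := neg_injective hab
    have ha := ZMod.val_cast_of_lt (show ((a : ℕ)) < M from a.2)
    have hb := ZMod.val_cast_of_lt (show ((b : ℕ)) < M from b.2)
    apply Fin.ext
    have := congrArg ZMod.val hab2
    simpa [ha, hb] using this
  have hnodup : (lC M).Nodup := by
    rw [lC, List.ofFn_eq_map]
    exact (List.nodup_finRange M).map hinj
  have hmem : i ∈ lC M := by
    rw [lC, List.ofFn_eq_map]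
    refine List.mem_map.mpr ⟨⟨(-i).val, ZMod.val_lt _⟩, List.mem_finRange _, ?_⟩
    rw [hg]
    have : ((((-i).val : ℕ)) : ZMod M) = -i := ZMod.natCast_rightInverse (-i)
    rw [this, neg_neg]
  exact List.count_eq_one_of_mem hnodup hmem

lemma em_one_C [NeZero M] : ∃ x : ℤ, em (fun _ => 1) = ω ^ x • Cfull M := by
  obtain ⟨y, hy⟩ := straight (M := M) (lC M)
  have hcount : (fun i => (lC M).count i) = (fun _ : ZMod M => 1) := by
    funext i; exact lC_count i
  refine ⟨-y, ?_⟩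
  rw [Cfull_eq_E, hy, hcount, smul_smul, ← zpow_add₀ omega_ne_zero]
  norm_num

lemma em_const [NeZero M] (m : ℕ) :
    ∃ x : ℤ, em (fun _ : ZMod M => m) = ω ^ x • (Cfull M) ^ m := by
  induction m with
  | zero =>
    refine ⟨0, ?_⟩
    simp [em_zero]
  | succ m ih =>
    obtain ⟨y, hy⟩ := ih
    obtain ⟨z, hz⟩ := em_one_C (M := M)
    obtain ⟨x, hx⟩ := eprod (M := M) (fun _ => m) (fun _ => 1)
    have hconst : ((fun _ : ZMod M => m) + (fun _ : ZMod M => 1)) = (fun _ : ZMod M => m + 1) := rfl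
    rw [hconst] at hx
    refine ⟨-x + y + z, ?_⟩
    have := congrArg (fun u => (ω ^ (-x : ℤ)) • u) hx
    simp only [smul_smul, ← zpow_add₀ omega_ne_zero] at this
    rw [neg_add_cancel, zpow_zero, one_smul] at this
    rw [← this, hy, hz]
    simp only [smul_mul_assoc, mul_smul_comm, smul_smul]
    rw [pow_succ]
    congr 1
    rw [← zpow_add₀ omega_ne_zero, ← zpow_add₀ omega_ne_zero]
    · congr 1
      ring

lemma Cfull_central (hM : 3 ≤ M) [NeZero M] :
    Cfull M ∈ Subalgebra.center K (AaM M) := by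
  rw [Subalgebra.mem_center_iff]
  intro b
  obtain ⟨c, hc⟩ := rep_exists (M := M) b
  obtain ⟨z, hz⟩ := em_one_C (M := M)
  have hCem : ∀ a : ZMod M → ℕ, em a * Cfull M = Cfull M * em a := by
    intro a
    have hcomm : em a * em (fun _ => 1) = em (fun _ => 1) * em a :=
      commute_em hM (by rw [Qp_one_symm])
    have h1 : Cfull M = ω ^ (-z) • em (fun _ => 1) := by
      rw [hz, smul_smul, ← zpow_add₀ omega_ne_zero, neg_add_cancel, zpow_zero, one_smul]
    rw [h1, mul_smul_comm, smul_mul_assoc, hcomm]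
  rw [hc, Finsupp.sum, Finset.sum_mul, Finset.mul_sum]
  apply Finset.sum_congr rfl
  intro a _
  rw [smul_mul_assoc, mul_smul_comm, hCem]

lemma central_coeff (hM : 3 ≤ M) [NeZero M] {z : AaM M} {c : (ZMod M → ℕ) →₀ K}
    (hc : z = c.sum fun a r => r • em a) (hz : z ∈ Subalgebra.center K (AaM M)) :
    ∀ a ∈ c.support, ∀ n : ZMod M, a (n + 1) = a (n - 1) := by
  intro a ha n
  have hcomm : w M n * z = z * w M n := (Subalgebra.mem_center_iff.mp hz) (w M n)
  have hrep0 : ρA hM z (Finsupp.single 0 1)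
      = ∑ a' ∈ c.support, (c a' * ω ^ (ta a')) • Finsupp.single a' (1:K) := by
    rw [hc, rhoA_rep hM]
    apply Finset.sum_congr rfl
    intro a' _
    simp only [Qp_zero, add_zero]
  have hs1 : ρA hM (w M n) (ρA hM z (Finsupp.single 0 1))
      = ∑ a' ∈ c.support, (c a' * ω ^ (ta a' + a' (n+1))) • Finsupp.single (a' + D n) (1:K) := by
    rw [hrep0, map_sum]
    apply Finset.sum_congr rfl
    intro a' _
    rw [LinearMap.map_smul, ρA_w hM, ρgen_single, smul_smul, mul_assoc, ← pow_add]
  have hs2 : ρA hM z (ρA hM (w M n) (Finsupp.single 0 1))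
      = ∑ a' ∈ c.support, (c a' * ω ^ (ta a' + a' (n-1))) • Finsupp.single (a' + D n) (1:K) := by
    rw [ρA_w hM, ρgen_single]
    have h0D : ((0 : ZMod M → ℕ) + D n) = D n := zero_add _
    have h0n : (0 : ZMod M → ℕ) (n + 1) = 0 := rfl
    rw [h0D, h0n, pow_zero, one_smul, hc, rhoA_rep hM]
    apply Finset.sum_congr rfl
    intro a' _
    rw [Qp_D]
  have h := congrArg (fun u => ρA hM u (Finsupp.single 0 1)) hcomm
  simp only [map_mul, Module.End.mul_apply] at h
  rw [hs1, hs2] at h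
  have hinj : Function.Injective (fun a' : ZMod M → ℕ => a' + D n) :=
    fun x y hxy => by simpa using add_left_injective (D n) hxy
  have hL := congrArg (fun φ : V M => φ (a + D n)) h
  rw [eval_sum_single c.support _ _ hinj a ha, eval_sum_single c.support _ _ hinj a ha] at hL
  have hca : c a ≠ 0 := Finsupp.mem_support_iff.mp ha
  have hpow := mul_left_cancel₀ hca hL
  have := omega_pow_inj hpow
  omega

lemma const_of_period (hM : 3 ≤ M) (hodd : Odd M) (a : ZMod M → ℕ)
    (h : ∀ n : ZMod M, a (n + 1) = a (n - 1)) : ∀ n : ZMod M, a n = a 0 := by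
  haveI : NeZero M := ⟨by omega⟩
  have h2 : ∀ x : ZMod M, a (x + 2) = a x := by
    intro x
    have := h (x + 1)
    rw [add_sub_cancel_right] at this
    rw [← this]
    congr 1
    ring
  have hk : ∀ k : ℕ, ∀ x : ZMod M, a (x + 2 * (k : ZMod M)) = a x := by
    intro k
    induction k with
    | zero => intro x; simp
    | succ k ih =>
      intro x
      have harg : x + 2 * ((k + 1 : ℕ) : ZMod M) = (x + 2 * (k : ZMod M)) + 2 := by
        push_cast; ring
      rw [harg, h2, ih]
  intro n
  have hcop : Nat.Coprime 2 M := Nat.coprime_two_left.mpr hodd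
  set u := ZMod.unitOfCoprime 2 hcop with hu
  have hu2 : (u : ZMod M) = 2 := by
    rw [hu, ZMod.coe_unitOfCoprime]; norm_num
  set k : ℕ := ((u⁻¹ : (ZMod M)ˣ) * n : ZMod M).val with hk'
  have hkc : ((k : ℕ) : ZMod M) = ((u⁻¹ : (ZMod M)ˣ) : ZMod M) * n :=
    ZMod.natCast_rightInverse _
  have h2k : 2 * ((k : ℕ) : ZMod M) = n := by
    rw [hkc, ← hu2, ← mul_assoc]
    rw [← Units.val_mul, mul_inv_cancel, Units.val_one, one_mul]
  have := hk k 0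
  rw [zero_add, h2k] at this
  exact this

end Vol


/-- for odd `M ≥ 3`, the center of `A_M^a` is generated
by `C = u_M u_{M−1} ⋯ u_1`. -/
theorem stmt14 (M : ℕ) (hM : 3 ≤ M) (hodd : Odd M) :
    Subalgebra.center K (AaM M) = Algebra.adjoin K {Cfull M} := by
  haveI : NeZero M := ⟨by omega⟩
  apply le_antisymm
  · intro z hz
    obtain ⟨c, hc⟩ := Vol.rep_exists (M := M) z
    have hcoef := Vol.central_coeff hM hc hz
    rw [hc, Finsupp.sum]
    apply Subalgebra.sum_mem
    intro a ha
    have hconst : ∀ n, a n = a 0 :=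
      Vol.const_of_period hM hodd a (fun n => hcoef a ha n)
    have haconst : a = (fun _ : ZMod M => a 0) := funext hconst
    obtain ⟨x, hx⟩ := Vol.em_const (M := M) (a 0)
    have hem : Vol.em a = ω ^ x • (Cfull M) ^ (a 0) := by rw [haconst]; exact hx
    rw [hem]
    apply Subalgebra.smul_mem
    apply Subalgebra.smul_mem
    exact pow_mem (Algebra.self_mem_adjoin_singleton K _) _
  · apply Algebra.adjoin_le
    rw [Set.singleton_subset_iff]
    exact Vol.Cfull_central hM
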